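/- Let q ≡ 5 (mod 8) be a prime power and D = {x⁴ : x ∈ GF(q), x ≠ 0} the set of nonzero fourth powers. Then the Cayley digraph of the additive group of GF(q) with connection set D is an asymmetric normally regular digraph with parameters (q, k, λ, μ) where q = 4k+1 and q = 8(μ+λ)+5. -/

import Mathlib

/-- The set of nonzero fourth powers in a finite field. -/
def fourthPowers (F : Type*) [Field F] [Fintype F] [DecidableEq F] : Finset F :=
  (Finset.univ.filter (fun x : F => x ≠ 0)).image (fun x => x ^ 4)

namespace Aux18

variable {F : Type*} [Field F] [Fintype F] [DecidableEq F]

lemma mem_fourthPowers {y : F} : y ∈ fourthPowers F ↔ ∃ x : F, x ≠ 0 ∧ x ^ 4 = y := by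
  simp [fourthPowers]

lemma ne_zero_of_mem {y : F} (hy : y ∈ fourthPowers F) : y ≠ 0 := by
  obtain ⟨x, hx, rfl⟩ := mem_fourthPowers.mp hy
  exact pow_ne_zero _ hx

lemma mul_mem {a b : F} (ha : a ∈ fourthPowers F) (hb : b ∈ fourthPowers F) :
    a * b ∈ fourthPowers F := by
  obtain ⟨x, hx, rfl⟩ := mem_fourthPowers.mp ha
  obtain ⟨y, hy, rfl⟩ := mem_fourthPowers.mp hb
  exact mem_fourthPowers.mpr ⟨x * y, mul_ne_zero hx hy, by ring⟩

lemma inv_mem {a : F} (ha : a ∈ fourthPowers F) : a⁻¹ ∈ fourthPowers F := by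
  obtain ⟨x, hx, rfl⟩ := mem_fourthPowers.mp ha
  exact mem_fourthPowers.mpr ⟨x⁻¹, inv_ne_zero hx, by rw [← inv_pow]⟩

noncomputable def Sq (F : Type*) [Field F] [Fintype F] [DecidableEq F] : Finset F :=
  have : DecidablePred (fun g : F => g ≠ 0 ∧ IsSquare g) := Classical.decPred _
  Finset.univ.filter (fun g : F => g ≠ 0 ∧ IsSquare g)

lemma mem_Sq {g : F} : g ∈ Sq F ↔ g ≠ 0 ∧ IsSquare g := by
  simp [Sq]

lemma not_neg_mem (hneg1 : (-1 : F) ∉ fourthPowers F) {x : F} (hx : x ∈ fourthPowers F) :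
    -x ∉ fourthPowers F := by
  intro h
  have hx0 := ne_zero_of_mem hx
  apply hneg1
  have : (-x) * x⁻¹ = -1 := by field_simp
  exact this ▸ mul_mem h (inv_mem hx)

/-- counting function -/
def N (F : Type*) [Field F] [Fintype F] [DecidableEq F] (g : F) : ℕ :=
  (((fourthPowers F) ×ˢ (fourthPowers F)).filter (fun p => p.2 - p.1 = g)).card

lemma N_neg (g : F) : N F (-g) = N F g := by
  unfold N
  refine Finset.card_nbij' (fun p => (p.2, p.1)) (fun p => (p.2, p.1)) ?_ ?_ ?_ ?_
  · intro a ha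
    simp only [Finset.mem_coe, Finset.mem_filter, Finset.mem_product] at ha ⊢
    exact ⟨⟨ha.1.2, ha.1.1⟩, by linear_combination -ha.2⟩
  · intro a ha
    simp only [Finset.mem_coe, Finset.mem_filter, Finset.mem_product] at ha ⊢
    exact ⟨⟨ha.1.2, ha.1.1⟩, by linear_combination -ha.2⟩
  · intro a _; rfl
  · intro a _; rfl

lemma N_mul {c : F} (hc : c ∈ fourthPowers F) (g : F) : N F (c * g) = N F g := by
  have hc0 : c ≠ 0 := ne_zero_of_mem hc
  unfold N
  symm
  refine Finset.card_nbij' (fun p => (c * p.1, c * p.2)) (fun p => (c⁻¹ * p.1, c⁻¹ * p.2))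
    ?_ ?_ ?_ ?_
  · intro a ha
    simp only [Finset.mem_coe, Finset.mem_filter, Finset.mem_product] at ha ⊢
    refine ⟨⟨mul_mem hc ha.1.1, mul_mem hc ha.1.2⟩, ?_⟩
    linear_combination c * ha.2
  · intro a ha
    simp only [Finset.mem_coe, Finset.mem_filter, Finset.mem_product] at ha ⊢
    refine ⟨⟨mul_mem (inv_mem hc) ha.1.1, mul_mem (inv_mem hc) ha.1.2⟩, ?_⟩
    have := ha.2
    field_simp
    linear_combination this
  · intro a _
    have h1 : c⁻¹ * (c * a.1) = a.1 := by field_simp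
    have h2 : c⁻¹ * (c * a.2) = a.2 := by field_simp
    rw [Prod.ext_iff]; exact ⟨h1, h2⟩
  · intro a _
    have h1 : c * (c⁻¹ * a.1) = a.1 := by field_simp
    have h2 : c * (c⁻¹ * a.2) = a.2 := by field_simp
    rw [Prod.ext_iff]; exact ⟨h1, h2⟩

lemma sum_N : ∑ g : F, N F g = (fourthPowers F).card * (fourthPowers F).card := by
  unfold N
  rw [← Finset.card_product]
  exact (Finset.card_eq_sum_card_fiberwise
    (f := fun p : F × F => p.2 - p.1) (t := Finset.univ) (s := fourthPowers F ×ˢ fourthPowers F)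
    (fun x _ => Finset.mem_univ _)).symm

lemma N_zero : N F 0 = (fourthPowers F).card := by
  unfold N
  refine Finset.card_nbij' (fun p => p.1) (fun x => (x, x)) ?_ ?_ ?_ ?_
  · intro a ha
    simp only [Finset.mem_coe, Finset.mem_filter, Finset.mem_product] at ha
    exact ha.1.1
  · intro a ha
    simp only [Finset.mem_coe, Finset.mem_filter, Finset.mem_product]
    exact ⟨⟨ha, ha⟩, sub_self a⟩
  · intro a ha
    simp only [Finset.mem_coe, Finset.mem_filter, Finset.mem_product] at ha
    have h2 : a.2 = a.1 := by linear_combination ha.2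
    rw [Prod.ext_iff]
    exact ⟨rfl, h2.symm⟩
  · intro a _; rfl


lemma fiber_card {i : F} (hi : i * i = -1) (h2 : (-1 : F) ≠ 1) {b : F} (hb : b ≠ 0) :
    ((Finset.univ.filter (fun x : F => x ≠ 0)).filter (fun x => x ^ 4 = b ^ 4)).card = 4 := by
  have hi0 : i ≠ 0 := by
    rintro rfl; rw [mul_zero] at hi
    exact one_ne_zero (α := F) (by linear_combination hi)
  have hi1 : i ≠ 1 := by rintro rfl; rw [mul_one] at hi; exact h2 hi.symm
  have hin1 : i ≠ -1 := by rintro rfl; rw [neg_mul_neg, one_mul] at hi; exact h2 hi.symm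
  have cancel : ∀ u v : F, u * b = v * b → u = v := fun u v h => mul_right_cancel₀ hb h
  have hii : i ≠ -i := by
    intro h
    have h20 : (2 : F) * i = 0 := by linear_combination h
    rcases mul_eq_zero.mp h20 with h' | h'
    · exact h2 (by linear_combination -h')
    · exact hi0 h'
  have hset : (Finset.univ.filter (fun x : F => x ≠ 0)).filter (fun x => x ^ 4 = b ^ 4)
      = {b, i*b, -b, -(i*b)} := by
    ext x
    simp only [Finset.mem_filter, Finset.mem_univ, true_and, Finset.mem_insert,
      Finset.mem_singleton]
    constructor
    · rintro ⟨hx0, hx4⟩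
      have key : (x - b) * (x + b) * ((x - i*b) * (x + i*b)) = 0 := by
        linear_combination hx4 + (b^4 - b^2*x^2) * hi
      rcases mul_eq_zero.mp key with h | h
      · rcases mul_eq_zero.mp h with h | h
        · exact Or.inl (sub_eq_zero.mp h)
        · exact Or.inr (Or.inr (Or.inl (eq_neg_of_add_eq_zero_left h)))
      · rcases mul_eq_zero.mp h with h | h
        · exact Or.inr (Or.inl (sub_eq_zero.mp h))
        · exact Or.inr (Or.inr (Or.inr (eq_neg_of_add_eq_zero_left h)))
    · have hib : i * b ≠ 0 := mul_ne_zero hi0 hb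
      rintro (rfl | rfl | rfl | rfl)
      · exact ⟨hb, rfl⟩
      · exact ⟨hib, by linear_combination (i*i - 1) * b^4 * hi⟩
      · exact ⟨neg_ne_zero.mpr hb, by ring⟩
      · exact ⟨neg_ne_zero.mpr hib, by linear_combination (i*i - 1) * b^4 * hi⟩
  rw [hset]
  have d1 : b ≠ i*b := fun h => hi1 (cancel i 1 (by linear_combination -h))
  have d2 : b ≠ -b := fun h => h2 (cancel (-1) 1 (by linear_combination -h))
  have d3 : b ≠ -(i*b) := fun h => hin1 (by
    have h' := cancel 1 (-i) (by linear_combination h)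
    linear_combination h')
  have d4 : i*b ≠ -b := fun h => hin1 (cancel i (-1) (by linear_combination h))
  have d5 : i*b ≠ -(i*b) := fun h => hii (cancel i (-i) (by linear_combination h))
  have d6 : -b ≠ -(i*b) := fun h => hi1 (by
    have h' := cancel (-1) (-i) (by linear_combination h)
    linear_combination h')
  rw [Finset.card_insert_of_notMem (by simp [d1, d2, d3]),
    Finset.card_insert_of_notMem (by simp [d4, d5]),
    Finset.card_insert_of_notMem (by simp [d6]),
    Finset.card_singleton]

lemma four_mul_card {i : F} (hi : i * i = -1) (h2 : (-1 : F) ≠ 1) :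
    (Finset.univ.filter (fun x : F => x ≠ 0)).card = 4 * (fourthPowers F).card := by
  rw [Finset.card_eq_sum_card_fiberwise (f := fun x : F => x ^ 4) (t := fourthPowers F)
    (fun x hx => mem_fourthPowers.mpr ⟨x, (Finset.mem_filter.mp hx).2, rfl⟩)]
  rw [Finset.sum_congr rfl (fun y hy => ?_), Finset.sum_const, smul_eq_mul, mul_comm]
  obtain ⟨b, hb, rfl⟩ := mem_fourthPowers.mp hy
  exact fiber_card hi h2 hb


/-- set of nonzero squares -/
lemma sq_fiber_card (h2 : (-1 : F) ≠ 1) {b : F} (hb : b ≠ 0) :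
    ((Finset.univ.filter (fun x : F => x ≠ 0)).filter (fun x => x ^ 2 = b ^ 2)).card = 2 := by
  have hset : (Finset.univ.filter (fun x : F => x ≠ 0)).filter (fun x => x ^ 2 = b ^ 2)
      = {b, -b} := by
    ext x
    simp only [Finset.mem_filter, Finset.mem_univ, true_and, Finset.mem_insert,
      Finset.mem_singleton]
    constructor
    · rintro ⟨hx0, hx2⟩
      have key : (x - b) * (x + b) = 0 := by linear_combination hx2
      rcases mul_eq_zero.mp key with h | h
      · exact Or.inl (sub_eq_zero.mp h)
      · exact Or.inr (eq_neg_of_add_eq_zero_left h)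
    · rintro (rfl | rfl)
      · exact ⟨hb, rfl⟩
      · exact ⟨neg_ne_zero.mpr hb, by ring⟩
  rw [hset, Finset.card_insert_of_notMem (by
    simp only [Finset.mem_singleton]
    intro h
    have h' : (2 : F) * b = 0 := by linear_combination h
    rcases mul_eq_zero.mp h' with h' | h'
    · exact h2 (by linear_combination -h')
    · exact hb h'), Finset.card_singleton]

lemma two_mul_card_Sq (h2 : (-1 : F) ≠ 1) :
    (Finset.univ.filter (fun x : F => x ≠ 0)).card = 2 * (Sq F).card := by
  rw [Finset.card_eq_sum_card_fiberwise (f := fun x : F => x ^ 2) (t := Sq F)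
    (fun x hx => mem_Sq.mpr ⟨pow_ne_zero _ (Finset.mem_filter.mp hx).2,
      ⟨x, (sq x)⟩⟩)]
  rw [Finset.sum_congr rfl (fun y hy => ?_), Finset.sum_const, smul_eq_mul, mul_comm]
  obtain ⟨hy0, c, hc⟩ := mem_Sq.mp hy
  have hc0 : c ≠ 0 := by rintro rfl; rw [mul_zero] at hc; exact hy0 hc
  have : y = c ^ 2 := by rw [hc]; ring
  rw [this]
  exact sq_fiber_card h2 hc0

lemma neg_one_not_mem {q : ℕ} (hcard : Fintype.card F = q) (h5 : q % 8 = 5)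
    (h2 : (-1 : F) ≠ 1) : (-1 : F) ∉ fourthPowers F := by
  intro h
  obtain ⟨x, hx0, hx4⟩ := mem_fourthPowers.mp h
  set u : Fˣ := Units.mk0 x hx0 with hu
  have hu8 : u ^ 8 = 1 := by
    ext
    push_cast [hu]
    calc x ^ 8 = (x ^ 4) ^ 2 := by ring
    _ = 1 := by rw [hx4]; ring
  have hu4 : u ^ 4 ≠ 1 := by
    intro h'
    apply h2
    have := congrArg (Units.val) h'
    rw [show ((u ^ 4 : Fˣ) : F) = x ^ 4 by rw [Units.val_pow_eq_pow_val, hu, Units.val_mk0], hx4] at this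
    exact this
  have hdvd : orderOf u ∣ 8 := orderOf_dvd_of_pow_eq_one hu8
  have hndvd : ¬ orderOf u ∣ 4 := fun hd => hu4 (orderOf_dvd_iff_pow_eq_one.mp hd)
  have ho8 : orderOf u = 8 := by
    have hle := Nat.le_of_dvd (by norm_num) hdvd
    interval_cases h : orderOf u <;> revert hdvd hndvd <;> decide
  have h8 : (8 : ℕ) ∣ q - 1 := by
    have := orderOf_dvd_card (x := u)
    rw [ho8, Fintype.card_units, hcard] at this
    exact this
  omega


end Aux18
section
open Aux18

variable {F : Type*} [Field F] [Fintype F] [DecidableEq F]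

lemma Aux18.squares_eq {i : F} (hi : i * i = -1) (h2 : (-1:F) ≠ 1)
    (hneg1 : (-1:F) ∉ fourthPowers F) :
    Sq F = fourthPowers F ∪ (fourthPowers F).image (fun x => -x) := by
  symm
  apply Finset.eq_of_subset_of_card_le
  · intro g hg
    rcases Finset.mem_union.mp hg with h | h
    · obtain ⟨x, hx0, rfl⟩ := mem_fourthPowers.mp h
      exact mem_Sq.mpr ⟨pow_ne_zero _ hx0, ⟨x^2, by ring⟩⟩
    · obtain ⟨y, hy, rfl⟩ := Finset.mem_image.mp h
      obtain ⟨x, hx0, rfl⟩ := mem_fourthPowers.mp hy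
      exact mem_Sq.mpr ⟨neg_ne_zero.mpr (pow_ne_zero _ hx0),
        ⟨i * x^2, by linear_combination (-(x^4)) * hi⟩⟩
  · have hdisj : Disjoint (fourthPowers F) ((fourthPowers F).image (fun x => -x)) := by
      rw [Finset.disjoint_left]
      intro a ha hb
      obtain ⟨y, hy, hya⟩ := Finset.mem_image.mp hb
      exact not_neg_mem hneg1 ha (by rw [← hya, neg_neg]; exact hy)
    rw [Finset.card_union_of_disjoint hdisj, Finset.card_image_of_injective _ neg_injective]
    have h4 := four_mul_card hi h2
    have h2' := two_mul_card_Sq (F := F) h2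
    omega

lemma Aux18.mem_or_neg_mem_iff {i : F} (hi : i * i = -1) (h2 : (-1:F) ≠ 1)
    (hneg1 : (-1:F) ∉ fourthPowers F) {g : F} (hg : g ≠ 0) :
    (g ∈ fourthPowers F ∨ -g ∈ fourthPowers F) ↔ IsSquare g := by
  constructor
  · intro h
    have hmem : g ∈ fourthPowers F ∪ (fourthPowers F).image (fun x => -x) := by
      rcases h with h | h
      · exact Finset.mem_union_left _ h
      · exact Finset.mem_union_right _ (Finset.mem_image.mpr ⟨-g, h, neg_neg g⟩)
    rw [← squares_eq hi h2 hneg1] at hmem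
    exact (mem_Sq.mp hmem).2
  · intro h
    have hmem : g ∈ Sq F := mem_Sq.mpr ⟨hg, h⟩
    rw [squares_eq hi h2 hneg1] at hmem
    rcases Finset.mem_union.mp hmem with h | h
    · exact Or.inl h
    · obtain ⟨y, hy, hyg⟩ := Finset.mem_image.mp h
      exact Or.inr (by rw [← hyg, neg_neg]; exact hy)

lemma Aux18.N_eq_of_ratio {i : F} (hi : i * i = -1) (h2 : (-1:F) ≠ 1)
    (hneg1 : (-1:F) ∉ fourthPowers F) {g h : F} (hg : g ≠ 0) (hh : h ≠ 0)
    (hr : IsSquare (h * g⁻¹)) : N F h = N F g := by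
  have hmem : (h * g⁻¹ ∈ fourthPowers F ∨ -(h * g⁻¹) ∈ fourthPowers F) :=
    (mem_or_neg_mem_iff hi h2 hneg1 (mul_ne_zero hh (inv_ne_zero hg))).mpr hr
  rcases hmem with hc | hc
  · have : h = (h * g⁻¹) * g := by field_simp
    rw [this]
    exact N_mul hc g
  · have heq : -(h * g⁻¹) * g = -h := by field_simp
    calc N F h = N F (-(-(h * g⁻¹) * g)) := by rw [heq, neg_neg]
    _ = N F (-(h * g⁻¹) * g) := N_neg _
    _ = N F g := N_mul hc g

end

/-- For a prime power q ≡ 5 (mod 8), the Cayley digraph of the additive group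
    of GF(q) on the nonzero fourth powers D is an asymmetric normally regular
    digraph with parameters (q, k, λ, μ), q = 4k+1 = 8(μ+λ)+5. -/
theorem stmt18 (q : ℕ) (hq : IsPrimePow q) (h5 : q % 8 = 5)
    (F : Type*) [Field F] [Fintype F] [DecidableEq F]
    (hcard : Fintype.card F = q) :
    ∃ k l m : ℕ, q = 4 * k + 1 ∧ q = 8 * (m + l) + 5 ∧
      (fourthPowers F).card = k ∧
      (∀ x ∈ fourthPowers F, -x ∉ fourthPowers F) ∧
      ∀ g : F, g ≠ 0 →
        (((fourthPowers F) ×ˢ (fourthPowers F)).filter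
            (fun p => p.2 - p.1 = g)).card =
          if g ∈ fourthPowers F ∨ -g ∈ fourthPowers F then l else m := by
  classical
  have hchar2 : ringChar F ≠ 2 := by
    intro h
    have := FiniteField.even_card_iff_char_two.mp h
    rw [hcard] at this
    omega
  have h2 : (-1 : F) ≠ 1 := Ring.neg_one_ne_one_of_char_ne_two hchar2
  obtain ⟨i, hi⟩ : ∃ i : F, i * i = -1 := by
    have hsq : IsSquare (-1 : F) := FiniteField.isSquare_neg_one_iff.mpr (by rw [hcard]; omega)
    obtain ⟨r, hr⟩ := hsq
    exact ⟨r, hr.symm⟩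
  have hneg1 : (-1 : F) ∉ fourthPowers F := Aux18.neg_one_not_mem hcard h5 h2
  set k := (fourthPowers F).card with hk
  have hfilter : (Finset.univ.filter (fun x : F => x ≠ 0)).card = q - 1 := by
    rw [Finset.filter_ne', Finset.card_erase_of_mem (Finset.mem_univ 0), Finset.card_univ, hcard]
  have h4k : q - 1 = 4 * k := by rw [← hfilter]; exact Aux18.four_mul_card hi h2
  have hq4 : q = 4 * k + 1 := by omega
  have hk0 : 0 < k := by omega
  obtain ⟨u, hu⟩ := FiniteField.exists_nonsquare (F := F) hchar2
  have hu0 : u ≠ 0 := by rintro rfl; exact hu ⟨0, (mul_zero 0).symm⟩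
  set l := Aux18.N F 1 with hl
  set m := Aux18.N F u with hm
  have hpoint : ∀ g : F, g ≠ 0 → Aux18.N F g = if IsSquare g then l else m := by
    intro g hg
    by_cases hsq : IsSquare g
    · rw [if_pos hsq, hl]
      exact Aux18.N_eq_of_ratio hi h2 hneg1 one_ne_zero hg (by rwa [inv_one, mul_one])
    · rw [if_neg hsq, hm]
      apply Aux18.N_eq_of_ratio hi h2 hneg1 hu0 hg
      have hqg : quadraticChar F g = -1 := quadraticChar_neg_one_iff_not_isSquare.mpr hsq
      have hqu : quadraticChar F u = -1 := quadraticChar_neg_one_iff_not_isSquare.mpr hu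
      have hgu : IsSquare (g * u) := (quadraticChar_one_iff_isSquare (mul_ne_zero hg hu0)).mp
        (by rw [map_mul, hqg, hqu]; ring)
      obtain ⟨r, hr⟩ := hgu
      refine ⟨r * u⁻¹, ?_⟩
      field_simp
      linear_combination hr
  have hSq2k : (Aux18.Sq F).card = 2 * k := by
    have h2' := Aux18.two_mul_card_Sq (F := F) h2
    rw [hfilter] at h2'
    omega
  have hsum : ∑ g : F, Aux18.N F g = k * k := Aux18.sum_N
  have hSqsub : Aux18.Sq F ⊆ Finset.univ.erase 0 := fun g hg =>
    Finset.mem_erase.mpr ⟨(Aux18.mem_Sq.mp hg).1, Finset.mem_univ g⟩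
  have heq1 : Aux18.N F 0 + ∑ g ∈ Finset.univ.erase (0 : F), Aux18.N F g = k * k := by
    rw [Finset.add_sum_erase Finset.univ (Aux18.N F) (Finset.mem_univ (0:F))]
    exact hsum
  rw [Aux18.N_zero] at heq1
  have hsdiff := Finset.sum_sdiff (f := Aux18.N F) hSqsub
  have hSqsum : ∑ g ∈ Aux18.Sq F, Aux18.N F g = 2 * k * l := by
    rw [Finset.sum_congr rfl (fun g hg => ?_), Finset.sum_const, smul_eq_mul, hSq2k]
    obtain ⟨hg0, hgsq⟩ := Aux18.mem_Sq.mp hg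
    rw [hpoint g hg0, if_pos hgsq]
  have hTcard : ((Finset.univ.erase (0:F)) \ Aux18.Sq F).card = 2 * k := by
    rw [Finset.card_sdiff_of_subset hSqsub, Finset.card_erase_of_mem (Finset.mem_univ 0),
      Finset.card_univ, hcard, hSq2k]
    omega
  have hTsum : ∑ g ∈ (Finset.univ.erase (0:F)) \ Aux18.Sq F, Aux18.N F g = 2 * k * m := by
    rw [Finset.sum_congr rfl (fun g hg => ?_), Finset.sum_const, smul_eq_mul, hTcard]
    obtain ⟨hg1, hg2⟩ := Finset.mem_sdiff.mp hg
    have hg0 : g ≠ 0 := (Finset.mem_erase.mp hg1).1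
    have hgns : ¬ IsSquare g := fun hsq => hg2 (Aux18.mem_Sq.mpr ⟨hg0, hsq⟩)
    rw [hpoint g hg0, if_neg hgns]
  rw [← hsdiff, hTsum, hSqsum] at heq1
  have hrel : k = 2 * m + 2 * l + 1 := by
    have hkk : k * (2 * m + 2 * l + 1) = k * k := by
      calc k * (2 * m + 2 * l + 1) = k + (2 * k * m + 2 * k * l) := by ring
      _ = k * k := heq1
    exact (Nat.eq_of_mul_eq_mul_left hk0 hkk).symm
  refine ⟨k, l, m, hq4, by omega, rfl, fun x hx => Aux18.not_neg_mem hneg1 hx, ?_⟩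
  intro g hg
  have hiff := Aux18.mem_or_neg_mem_iff hi h2 hneg1 hg
  exact (hpoint g hg).trans (if_congr hiff.symm rfl rfl)
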